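/- Let f : ℝ → (0, ∞) be a probability density that is continuously differentiable with bounded derivative and strictly log-concave, and let h : ℝ → (0, ∞) be a strictly positive probability density. Fix reals s and t, and define for θ̄ ∈ ℝ: F(θ̄) = (∫_{s − t}^{∞} f(s − θ̄ − u) h(u) du) / (∫_ℝ f(s − θ̄ − u) h(u) du). Then F is continuously differentiable on ℝ and F'(θ̄) < 0 for every θ̄ ∈ ℝ. -/

import Mathlib

open MeasureTheory Set

lemma aux_bdd_of_deriv_bdd (f : ℝ → ℝ) (hf_pos : ∀ x, 0 < f x)
    (hf_int : Integrable f) (hf_one : ∫ x, f x = 1)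
    (hf_diff : Differentiable ℝ f) (M : ℝ) (hM : ∀ x, |deriv f x| ≤ M) :
    ∀ x, f x ≤ Real.sqrt (4 * (M + 1)) := by
  have hM0 : 0 ≤ M := le_trans (abs_nonneg _) (hM 0)
  set M' : ℝ := M + 1 with hM'
  have hM'pos : 0 < M' := by linarith
  have hlip : LipschitzWith M'.toNNReal f := by
    refine lipschitzWith_of_nnnorm_deriv_le hf_diff fun x => ?_
    rw [← NNReal.coe_le_coe, coe_nnnorm, Real.norm_eq_abs, Real.coe_toNNReal _ hM'pos.le]
    linarith [hM x]
  intro x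
  set K : ℝ := f x with hK
  have hKpos : 0 < K := hf_pos x
  set δ : ℝ := K / (2 * M') with hδ
  have hδpos : 0 < δ := by positivity
  have hlow : ∀ y ∈ Icc x (x + δ), K / 2 ≤ f y := by
    intro y hy
    have h1 : dist (f y) (f x) ≤ M' * dist y x := by
      have := hlip.dist_le_mul y x
      rwa [Real.coe_toNNReal _ hM'pos.le] at this
    have h2 : dist y x ≤ δ := by
      rw [Real.dist_eq, abs_le]
      constructor <;> [linarith [hy.1]; linarith [hy.2]]
    have h3 : |f y - f x| ≤ M' * δ := by
      rw [← Real.dist_eq]; exact h1.trans (by nlinarith)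
    have h4 : M' * δ = K / 2 := by rw [hδ]; field_simp
    rw [abs_le] at h3
    nlinarith [h3.1]
  have hsub : (K / 2) * (volume (Icc x (x + δ))).toReal ≤ ∫ y in Icc x (x + δ), f y :=
    setIntegral_ge_of_const_le_real measurableSet_Icc (by simp [Real.volume_Icc]) hlow
      hf_int.integrableOn
  have hle1 : ∫ y in Icc x (x + δ), f y ≤ 1 := by
    rw [← hf_one]
    exact setIntegral_le_integral hf_int (Filter.Eventually.of_forall fun y => (hf_pos y).le)
  have hvol : (volume (Icc x (x + δ))).toReal = δ := by
    rw [Real.volume_Icc]; simp [ENNReal.toReal_ofReal hδpos.le]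
  rw [hvol] at hsub
  have hK2 : K ^ 2 ≤ 4 * M' := by
    have : K / 2 * δ ≤ 1 := hsub.trans hle1
    rw [hδ, div_mul_div_comm, div_le_one (by positivity)] at this
    nlinarith [this]
  calc K ≤ Real.sqrt (K ^ 2) := by rw [Real.sqrt_sq hKpos.le]
    _ ≤ Real.sqrt (4 * (M + 1)) := Real.sqrt_le_sqrt (by rw [← hM']; exact hK2)

/-- Paper's lemma (SFOSD of the posterior type distribution given the common component):
with `f` a strictly positive, `C¹`, boundedly differentiable, strictly log-concave density
and `h` a strictly positive density, the Bayes-rule posterior probability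
`F(θ̄) = (∫_{s−t}^∞ f(s−θ̄−u) h(u) du) / (∫_ℝ f(s−θ̄−u) h(u) du)`
is continuously differentiable and strictly decreasing in `θ̄`. -/
theorem posterior_cdf_decreasing_in_common_component
    (f h : ℝ → ℝ)
    (hf_pos : ∀ x, 0 < f x) (hf_dens : ∫ x, f x = 1)
    (hf_smooth : ContDiff ℝ 1 f)
    (hf_bdd : ∃ M, ∀ x, |deriv f x| ≤ M)
    (hf_logconc : StrictConcaveOn ℝ Set.univ fun x => Real.log (f x))
    (hh_pos : ∀ x, 0 < h x) (hh_dens : ∫ x, h x = 1)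
    (s t : ℝ) (F : ℝ → ℝ)
    (hF : ∀ θbar, F θbar =
      (∫ u in Set.Ioi (s - t), f (s - θbar - u) * h u) / ∫ u, f (s - θbar - u) * h u) :
    ContDiff ℝ 1 F ∧ ∀ θbar, deriv F θbar < 0 := by
  obtain ⟨M, hM⟩ := hf_bdd
  have hM0 : 0 ≤ M := le_trans (abs_nonneg _) (hM 0)
  have hf_int : Integrable f := by
    by_contra hc
    rw [integral_undef hc] at hf_dens; norm_num at hf_dens
  have hh_int : Integrable h := by
    by_contra hc
    rw [integral_undef hc] at hh_dens; norm_num at hh_dens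
  have hf_diff : Differentiable ℝ f := hf_smooth.differentiable one_ne_zero
  have hf'_cont : Continuous (deriv f) := hf_smooth.continuous_deriv le_rfl
  set C : ℝ := Real.sqrt (4 * (M + 1)) with hCdef
  have hC : ∀ x, f x ≤ C := aux_bdd_of_deriv_bdd f hf_pos hf_int hf_dens hf_diff M hM
  set a : ℝ := s - t with hadef
  -- continuity helpers
  have hcf : ∀ θ : ℝ, Continuous fun u => f (s - θ - u) :=
    fun θ => hf_smooth.continuous.comp ((continuous_const).sub continuous_id)
  have hcf' : ∀ θ : ℝ, Continuous fun u => deriv f (s - θ - u) :=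
    fun θ => hf'_cont.comp ((continuous_const).sub continuous_id)
  -- integrability
  have key_int : ∀ (μ : Measure ℝ), Integrable h μ → ∀ θ : ℝ,
      Integrable (fun u => f (s - θ - u) * h u) μ := by
    intro μ hhμ θ
    refine (hhμ.const_mul C).mono'
      ((hcf θ).aestronglyMeasurable.mul hhμ.aestronglyMeasurable) ?_
    filter_upwards with u
    rw [norm_mul, Real.norm_eq_abs, Real.norm_eq_abs,
      abs_of_pos (hf_pos _), abs_of_pos (hh_pos _)]
    exact mul_le_mul_of_nonneg_right (hC _) (hh_pos u).le
  have key_int' : ∀ (μ : Measure ℝ), Integrable h μ → ∀ θ : ℝ,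
      Integrable (fun u => deriv f (s - θ - u) * h u) μ := by
    intro μ hhμ θ
    refine (hhμ.const_mul M).mono'
      ((hcf' θ).aestronglyMeasurable.mul hhμ.aestronglyMeasurable) ?_
    filter_upwards with u
    rw [norm_mul, Real.norm_eq_abs, Real.norm_eq_abs, abs_of_pos (hh_pos _)]
    exact mul_le_mul_of_nonneg_right (hM _) (hh_pos u).le
  -- differentiation under the integral sign
  have key_deriv : ∀ (μ : Measure ℝ), Integrable h μ → ∀ θ₀ : ℝ,
      HasDerivAt (fun θ => ∫ u, f (s - θ - u) * h u ∂μ)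
        (∫ u, -(deriv f (s - θ₀ - u) * h u) ∂μ) θ₀ := by
    intro μ hhμ θ₀
    have inner : ∀ (x u : ℝ), HasDerivAt (fun θ : ℝ => s - θ - u) (-1) x := by
      intro x u
      simpa using (((hasDerivAt_id x).const_sub s).sub_const u)
    refine (hasDerivAt_integral_of_dominated_loc_of_deriv_le
      (F := fun θ u => f (s - θ - u) * h u)
      (F' := fun θ u => -(deriv f (s - θ - u) * h u))
      (bound := fun u => M * |h u|) (Metric.ball_mem_nhds θ₀ one_pos)
      (Filter.Eventually.of_forall fun θ =>
        (hcf θ).aestronglyMeasurable.mul hhμ.aestronglyMeasurable)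
      (key_int μ hhμ θ₀)
      (((hcf' θ₀).aestronglyMeasurable.mul hhμ.aestronglyMeasurable).neg)
      ?_ ((hhμ.abs).const_mul M) ?_).2
    · filter_upwards with u x _
      rw [norm_neg, norm_mul, Real.norm_eq_abs, Real.norm_eq_abs]
      exact mul_le_mul_of_nonneg_right (hM _) (abs_nonneg _)
    · filter_upwards with u x _
      have h1 : HasDerivAt (fun θ => f (s - θ - u)) (deriv f (s - x - u) * (-1)) x :=
        (hf_diff (s - x - u)).hasDerivAt.comp x (inner x u)
      have h2 := h1.mul_const (h u)
      exact h2.congr_deriv (by ring)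
  -- pieces
  set A : ℝ → ℝ := fun θ => ∫ u in Ioi a, f (s - θ - u) * h u with hAdef
  set B : ℝ → ℝ := fun θ => ∫ u in Iic a, f (s - θ - u) * h u with hBdef
  set A' : ℝ → ℝ := fun θ => ∫ u in Ioi a, deriv f (s - θ - u) * h u with hA'def
  set B' : ℝ → ℝ := fun θ => ∫ u in Iic a, deriv f (s - θ - u) * h u with hB'def
  set D : ℝ → ℝ := fun θ => ∫ u, f (s - θ - u) * h u with hDdef
  have hsplit : ∀ θ, B θ + A θ = D θ := fun θ =>
    intervalIntegral.integral_Iic_add_Ioi (key_int _ hh_int.restrict θ)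
      (key_int _ hh_int.restrict θ)
  have hsplit' : ∀ θ, B' θ + A' θ = ∫ u, deriv f (s - θ - u) * h u := fun θ =>
    intervalIntegral.integral_Iic_add_Ioi (key_int' _ hh_int.restrict θ)
      (key_int' _ hh_int.restrict θ)
  have hA_deriv : ∀ θ, HasDerivAt A (-A' θ) θ := by
    intro θ
    have := key_deriv (volume.restrict (Ioi a)) hh_int.restrict θ
    rwa [integral_neg] at this
  have hD_deriv : ∀ θ, HasDerivAt D (-(B' θ + A' θ)) θ := by
    intro θ
    have := key_deriv volume hh_int θ
    rwa [integral_neg, ← hsplit' θ] at this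
  -- positivity of the pieces
  have hposI : ∀ (S : Set ℝ), volume S = ⊤ → ∀ θ,
      0 < ∫ u in S, f (s - θ - u) * h u := by
    intro S hS θ
    refine (integral_pos_iff_support_of_nonneg_ae
      (Filter.Eventually.of_forall fun u => (mul_pos (hf_pos _) (hh_pos _)).le)
      (key_int _ hh_int.restrict θ)).mpr ?_
    have hsupp : Function.support (fun u => f (s - θ - u) * h u) = univ :=
      eq_univ_of_forall fun u => (mul_pos (hf_pos _) (hh_pos _)).ne'
    rw [hsupp, Measure.restrict_apply_univ, hS]
    exact ENNReal.zero_lt_top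
  have hA_pos : ∀ θ, 0 < A θ := hposI (Ioi a) Real.volume_Ioi
  have hB_pos : ∀ θ, 0 < B θ := hposI (Iic a) Real.volume_Iic
  have hD_pos : ∀ θ, 0 < D θ := by
    intro θ
    rw [← hsplit θ]; exact add_pos (hB_pos θ) (hA_pos θ)
  have hDne : ∀ θ, D θ ≠ 0 := fun θ => (hD_pos θ).ne'
  -- strict monotonicity of the log-derivative
  have hratio : StrictAnti fun x => deriv f x / f x := by
    have hld : ∀ x, HasDerivAt (fun y => Real.log (f y)) (deriv f x / f x) x := by
      intro x
      simpa [div_eq_mul_inv, mul_comm] using (hf_diff x).hasDerivAt.log (hf_pos x).ne'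
    have hsa : StrictAntiOn (deriv fun y => Real.log (f y)) univ :=
      hf_logconc.strictAntiOn_deriv fun x _ => (hld x).differentiableAt
    intro x y hxy
    have := hsa (mem_univ x) (mem_univ y) hxy
    rwa [(hld x).deriv, (hld y).deriv] at this
  -- the key strict inequalities
  have claimA : ∀ θ, (deriv f (s - θ - a) / f (s - θ - a)) * A θ < A' θ := by
    intro θ
    set r : ℝ := deriv f (s - θ - a) / f (s - θ - a) with hrdef
    have heq : (fun u => (deriv f (s - θ - u) - r * f (s - θ - u)) * h u)
        = fun u => deriv f (s - θ - u) * h u - r * (f (s - θ - u) * h u) := by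
      funext u; ring
    have hintg : Integrable (fun u => (deriv f (s - θ - u) - r * f (s - θ - u)) * h u)
        (volume.restrict (Ioi a)) := by
      rw [heq]
      exact (key_int' _ hh_int.restrict θ).sub
        ((key_int _ hh_int.restrict θ).const_mul r)
    have hpos : ∀ u ∈ Ioi a, 0 < (deriv f (s - θ - u) - r * f (s - θ - u)) * h u := by
      intro u hu
      have hx : s - θ - u < s - θ - a := by simp only [mem_Ioi] at hu; linarith
      have h1 : r < deriv f (s - θ - u) / f (s - θ - u) := hratio hx
      have h2 : r * f (s - θ - u) < deriv f (s - θ - u) :=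
        (lt_div_iff₀ (hf_pos _)).mp h1
      exact mul_pos (by linarith) (hh_pos u)
    have hI : 0 < ∫ u in Ioi a, (deriv f (s - θ - u) - r * f (s - θ - u)) * h u := by
      refine (integral_pos_iff_support_of_nonneg_ae ?_ hintg).mpr ?_
      · exact (ae_restrict_iff' measurableSet_Ioi).mpr
          (Filter.Eventually.of_forall fun u hu => (hpos u hu).le)
      · refine lt_of_lt_of_le ?_ (measure_mono fun u hu => (hpos u hu).ne')
        rw [Measure.restrict_apply_self, Real.volume_Ioi]
        exact ENNReal.zero_lt_top
    rw [heq, integral_sub (key_int' _ hh_int.restrict θ)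
      ((key_int _ hh_int.restrict θ).const_mul r), integral_const_mul] at hI
    linarith [hI]
  have claimB : ∀ θ, B' θ < (deriv f (s - θ - a) / f (s - θ - a)) * B θ := by
    intro θ
    set r : ℝ := deriv f (s - θ - a) / f (s - θ - a) with hrdef
    have heq : (fun u => (r * f (s - θ - u) - deriv f (s - θ - u)) * h u)
        = fun u => r * (f (s - θ - u) * h u) - deriv f (s - θ - u) * h u := by
      funext u; ring
    have hintg : Integrable (fun u => (r * f (s - θ - u) - deriv f (s - θ - u)) * h u)
        (volume.restrict (Iic a)) := by
      rw [heq]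
      exact ((key_int _ hh_int.restrict θ).const_mul r).sub
        (key_int' _ hh_int.restrict θ)
    have hnn : ∀ u ∈ Iic a, 0 ≤ (r * f (s - θ - u) - deriv f (s - θ - u)) * h u := by
      intro u hu
      have hx : s - θ - a ≤ s - θ - u := by simp only [mem_Iic] at hu; linarith
      rcases eq_or_lt_of_le hx with hx | hx
      · have : r * f (s - θ - u) = deriv f (s - θ - u) := by
          rw [hrdef, hx, div_mul_cancel₀ _ (hf_pos (s - θ - u)).ne']
        rw [this]; simp
      · have h1 : deriv f (s - θ - u) / f (s - θ - u) < r := hratio hx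
        have h2 : deriv f (s - θ - u) < r * f (s - θ - u) :=
          (div_lt_iff₀ (hf_pos _)).mp h1
        exact (mul_pos (by linarith) (hh_pos u)).le
    have hpos : ∀ u ∈ Iio a, 0 < (r * f (s - θ - u) - deriv f (s - θ - u)) * h u := by
      intro u hu
      have hx : s - θ - a < s - θ - u := by simp only [mem_Iio] at hu; linarith
      have h1 : deriv f (s - θ - u) / f (s - θ - u) < r := hratio hx
      have h2 : deriv f (s - θ - u) < r * f (s - θ - u) :=
        (div_lt_iff₀ (hf_pos _)).mp h1
      exact mul_pos (by linarith) (hh_pos u)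
    have hI : 0 < ∫ u in Iic a, (r * f (s - θ - u) - deriv f (s - θ - u)) * h u := by
      refine (integral_pos_iff_support_of_nonneg_ae ?_ hintg).mpr ?_
      · exact (ae_restrict_iff' measurableSet_Iic).mpr
          (Filter.Eventually.of_forall hnn)
      · refine lt_of_lt_of_le ?_ (measure_mono fun u hu => (hpos u hu).ne')
        rw [Measure.restrict_apply measurableSet_Iio,
          inter_eq_self_of_subset_left Iio_subset_Iic_self, Real.volume_Iio]
        exact ENNReal.zero_lt_top
    rw [heq, integral_sub ((key_int _ hh_int.restrict θ).const_mul r)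
      (key_int' _ hh_int.restrict θ), integral_const_mul] at hI
    linarith [hI]
  -- F as quotient
  have hFeq : F = fun θ => A θ / D θ := funext fun θ => hF θ
  have hF_deriv : ∀ θ, HasDerivAt F
      ((-A' θ * D θ - A θ * -(B' θ + A' θ)) / D θ ^ 2) θ := by
    intro θ
    rw [hFeq]
    exact (hA_deriv θ).div (hD_deriv θ) (hDne θ)
  constructor
  · -- continuous differentiability
    have hA'cont : Continuous A' := by
      refine continuous_of_dominated
        (fun θ => (hcf' θ).aestronglyMeasurable.mul
          hh_int.restrict.aestronglyMeasurable)
        (fun θ => Filter.Eventually.of_forall fun u => ?_)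
        (hh_int.restrict.abs.const_mul M)
        (Filter.Eventually.of_forall fun u =>
          (hf'_cont.comp ((continuous_const.sub continuous_id).sub continuous_const)).mul
            continuous_const)
      rw [norm_mul, Real.norm_eq_abs, Real.norm_eq_abs]
      exact mul_le_mul_of_nonneg_right (hM _) (abs_nonneg _)
    have hDERcont : Continuous fun θ => ∫ u, deriv f (s - θ - u) * h u := by
      refine continuous_of_dominated
        (fun θ => (hcf' θ).aestronglyMeasurable.mul hh_int.aestronglyMeasurable)
        (fun θ => Filter.Eventually.of_forall fun u => ?_)
        (hh_int.abs.const_mul M)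
        (Filter.Eventually.of_forall fun u =>
          (hf'_cont.comp ((continuous_const.sub continuous_id).sub continuous_const)).mul
            continuous_const)
      rw [norm_mul, Real.norm_eq_abs, Real.norm_eq_abs]
      exact mul_le_mul_of_nonneg_right (hM _) (abs_nonneg _)
    have hAcd : ContDiff ℝ 1 A := by
      rw [contDiff_one_iff_deriv]
      refine ⟨fun θ => (hA_deriv θ).differentiableAt, ?_⟩
      have : deriv A = fun θ => -A' θ := funext fun θ => (hA_deriv θ).deriv
      rw [this]
      exact hA'cont.neg
    have hDcd : ContDiff ℝ 1 D := by
      rw [contDiff_one_iff_deriv]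
      refine ⟨fun θ => (hD_deriv θ).differentiableAt, ?_⟩
      have : deriv D = fun θ => -(B' θ + A' θ) := funext fun θ => (hD_deriv θ).deriv
      rw [this]
      have heq2 : (fun θ => -(B' θ + A' θ)) = fun θ => -∫ u, deriv f (s - θ - u) * h u := by
        funext θ; rw [hsplit' θ]
      rw [heq2]
      exact hDERcont.neg
    rw [hFeq]
    exact hAcd.div hDcd hDne
  · -- strict decrease
    intro θ
    rw [(hF_deriv θ).deriv]
    have h1 : (deriv f (s - θ - a) / f (s - θ - a)) * A θ * B θ < A' θ * B θ :=
      mul_lt_mul_of_pos_right (claimA θ) (hB_pos θ)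
    have h2 : A θ * B' θ < A θ * ((deriv f (s - θ - a) / f (s - θ - a)) * B θ) :=
      mul_lt_mul_of_pos_left (claimB θ) (hA_pos θ)
    have hnum : -A' θ * D θ - A θ * -(B' θ + A' θ) < 0 := by
      rw [← hsplit θ]; nlinarith [h1, h2]
    exact div_neg_of_neg_of_pos hnum (pow_pos (hD_pos θ) 2)
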